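/- Let w > 0, ν ≥ 1, k ≠ 0, and let ψ̂ : [η₁,∞) → ℝ solve ψ̂'' = −w|k|²ψ̂ + (ν²−1/4)η^{−2}ψ̂. If ψ̂(η) → 0 and ψ̂'(η) → 0 as η → ∞, then ψ̂ ≡ 0. -/

import Mathlib

open Filter Real Set

theorem stmt_11 (w ν η₁ : ℝ) (hw : 0 < w) (hν : 1 ≤ ν) (hη₁ : 0 < η₁)
    (k : EuclideanSpace ℝ (Fin 3)) (hk : k ≠ 0)
    (ψ : ℝ → ℝ) (hψ : ContDiffOn ℝ 2 ψ (Set.Ici η₁))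
    (heq : ∀ η ≥ η₁, deriv (deriv ψ) η
        = -w * ‖k‖ ^ 2 * ψ η + (ν ^ 2 - 1 / 4) * η ^ (-2 : ℤ) * ψ η)
    (hlim : Tendsto ψ atTop (nhds 0))
    (hlim' : Tendsto (deriv ψ) atTop (nhds 0)) :
    ∀ η ≥ η₁, ψ η = 0 := by
  have hknorm : (0:ℝ) < ‖k‖ := norm_pos_iff.mpr hk
  set c : ℝ := w * ‖k‖ ^ 2 with hc
  have hc0 : 0 < c := by positivity
  set a : ℝ := ν ^ 2 - 1 / 4 with ha
  have ha0 : 0 ≤ a := by rw [ha]; nlinarith [sq_nonneg (ν - 1)]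
  set M : ℝ := a * max c⁻¹ 1 with hM
  have hM0 : 0 ≤ M := mul_nonneg ha0 (le_trans zero_le_one (le_max_right _ _))
  have hMa : a ≤ M := le_mul_of_one_le_right ha0 (le_max_right _ _)
  have hMc : a ≤ M * c := by
    calc a = a * (c⁻¹ * c) := by field_simp
    _ ≤ a * max c⁻¹ 1 * c := by
        rw [mul_assoc]
        exact mul_le_mul_of_nonneg_left (mul_le_mul_of_nonneg_right (le_max_left _ _) hc0.le) ha0
  set E : ℝ → ℝ := fun t => c * ψ t ^ 2 + deriv ψ t ^ 2 with hE
  set G : ℝ → ℝ := fun t => E t * Real.exp (-M * t⁻¹) with hG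
  -- differentiability on Ioi η₁
  have hsm : ∀ t ∈ Ioi η₁, ContDiffAt ℝ 2 ψ t := fun t ht => hψ.contDiffAt (Ici_mem_nhds ht)
  have hd1 : ∀ t ∈ Ioi η₁, HasDerivAt ψ (deriv ψ t) t := fun t ht =>
    ((hsm t ht).differentiableAt (by norm_num)).hasDerivAt
  have hdpsi' : DifferentiableOn ℝ (deriv ψ) (Ioi η₁) := by
    have h1 : ContDiffOn ℝ 1 (deriv ψ) (Ioi η₁) :=
      (hψ.mono Ioi_subset_Ici_self).deriv_of_isOpen isOpen_Ioi (by norm_num)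
    exact h1.differentiableOn (by norm_num)
  have hd2 : ∀ t ∈ Ioi η₁, HasDerivAt (deriv ψ) (deriv (deriv ψ) t) t := fun t ht =>
    ((hdpsi' t ht).differentiableAt (isOpen_Ioi.mem_nhds ht)).hasDerivAt
  -- derivative of G is nonneg on Ioi η₁
  have hGd : ∀ t ∈ Ioi η₁, ∃ g, HasDerivAt G g t ∧ 0 ≤ g := by
    intro t ht
    have ht0 : 0 < t := hη₁.trans ht
    have hEd : HasDerivAt E (c * (2 * ψ t * deriv ψ t)
        + 2 * deriv ψ t * deriv (deriv ψ) t) t := by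
      rw [hE]
      have h1 := ((hd1 t ht).pow 2).const_mul c
      have h2 := (hd2 t ht).pow 2
      exact (h1.add h2).congr_deriv (by simp)
    have hexp : HasDerivAt (fun s : ℝ => Real.exp (-M * s⁻¹))
        (Real.exp (-M * t⁻¹) * (-M * -(t ^ 2)⁻¹)) t :=
      ((hasDerivAt_inv ht0.ne').const_mul (-M)).exp
    refine ⟨_, (show HasDerivAt G _ t from hEd.mul hexp), ?_⟩
    have heqt := heq t (le_of_lt ht)
    have hs : (0:ℝ) < (t ^ 2)⁻¹ := by positivity
    have key : 0 ≤ (c * (2 * ψ t * deriv ψ t) + 2 * deriv ψ t * deriv (deriv ψ) t)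
        + E t * (M * (t ^ 2)⁻¹) := by
      have heqt' : deriv (deriv ψ) t = -(c * ψ t) + a * (t ^ 2)⁻¹ * ψ t := by
        have hzp : (t:ℝ) ^ (-2:ℤ) = ((t:ℝ) ^ 2)⁻¹ := by
          rw [zpow_neg]; norm_num
        rw [heqt, hzp, hc]; ring
      rw [heqt', hE]
      nlinarith [mul_nonneg (mul_nonneg hs.le ha0) (sq_nonneg (ψ t + deriv ψ t)),
        mul_nonneg (mul_nonneg (sub_nonneg.2 hMc) hs.le) (sq_nonneg (ψ t)),
        mul_nonneg (mul_nonneg (sub_nonneg.2 hMa) hs.le) (sq_nonneg (deriv ψ t))]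
    have hrw : (c * (2 * ψ t * deriv ψ t) + 2 * deriv ψ t * deriv (deriv ψ) t)
          * Real.exp (-M * t⁻¹) + E t * (Real.exp (-M * t⁻¹) * (-M * -(t ^ 2)⁻¹))
        = Real.exp (-M * t⁻¹) * ((c * (2 * ψ t * deriv ψ t)
          + 2 * deriv ψ t * deriv (deriv ψ) t) + E t * (M * (t ^ 2)⁻¹)) := by ring
    rw [hrw]
    exact mul_nonneg (Real.exp_pos _).le key
  -- G is monotone on Ioi η₁
  have hGmono : MonotoneOn G (Ioi η₁) := by
    apply monotoneOn_of_deriv_nonneg (convex_Ioi η₁)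
    · intro t ht
      obtain ⟨g, hg, _⟩ := hGd t ht
      exact hg.continuousAt.continuousWithinAt
    · rw [interior_Ioi]
      intro t ht
      obtain ⟨g, hg, _⟩ := hGd t ht
      exact hg.differentiableAt.differentiableWithinAt
    · rw [interior_Ioi]
      intro t ht
      obtain ⟨g, hg, hg0⟩ := hGd t ht
      rw [hg.deriv]; exact hg0
  -- G tends to zero
  have hGlim : Tendsto G atTop (nhds 0) := by
    have hEl : Tendsto E atTop (nhds 0) := by
      have := ((hlim.pow 2).const_mul c).add (hlim'.pow 2)
      simpa [hE] using this
    have hexpl : Tendsto (fun t : ℝ => Real.exp (-M * t⁻¹)) atTop (nhds 1) := by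
      have h1 : Tendsto (fun t : ℝ => -M * t⁻¹) atTop (nhds 0) := by
        simpa using tendsto_inv_atTop_zero.const_mul (-M)
      have := (Real.continuous_exp.tendsto 0).comp h1
      simpa [Function.comp_def] using this
    have := hEl.mul hexpl
    simpa [hG] using this
  -- conclude on Ioi η₁
  have hIoi : ∀ t ∈ Ioi η₁, ψ t = 0 := by
    intro t ht
    have hle : G t ≤ 0 := by
      apply ge_of_tendsto hGlim
      filter_upwards [eventually_ge_atTop t] with T hT
      exact hGmono ht (lt_of_lt_of_le ht hT) hT
    have hEt : E t ≤ 0 := by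
      have hexp0 : 0 < Real.exp (-M * t⁻¹) := Real.exp_pos _
      by_contra h
      push_neg at h
      have : 0 < G t := mul_pos h hexp0
      linarith
    have h1 : ψ t ^ 2 ≤ 0 := by
      have := sq_nonneg (deriv ψ t)
      have hEt' : c * ψ t ^ 2 + deriv ψ t ^ 2 ≤ 0 := hEt
      nlinarith [sq_nonneg (ψ t)]
    have := pow_eq_zero_iff (n := 2) (by norm_num) |>.mp (le_antisymm h1 (sq_nonneg _))
    exact this
  -- endpoint by continuity
  have hend : ψ η₁ = 0 := by
    have hcont : Tendsto ψ (nhdsWithin η₁ (Ioi η₁)) (nhds (ψ η₁)) :=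
      ((hψ.continuousOn η₁ (self_mem_Ici)).mono_left
        (nhdsWithin_mono _ Ioi_subset_Ici_self))
    have hzero : Tendsto ψ (nhdsWithin η₁ (Ioi η₁)) (nhds 0) := by
      apply Tendsto.congr' _ tendsto_const_nhds
      filter_upwards [self_mem_nhdsWithin] with x hx
      exact (hIoi x hx).symm
    exact tendsto_nhds_unique hcont hzero
  intro η hη
  rcases eq_or_lt_of_le hη with h | h
  · rw [← h]; exact hend
  · exact hIoi η h
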